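/- (Clark–Suen) For any pair of finite simple graphs X and Y, γ(X □ Y) ≥ (1/2)·γ(X)·γ(Y). -/
import Mathlib


open SimpleGraph

/-- `S` is a dominating set of `G`: every vertex is in `S` or adjacent to a member of `S`. -/
def IsDomSet {V : Type*} (G : SimpleGraph V) (S : Set V) : Prop :=
  ∀ v, v ∈ S ∨ ∃ u ∈ S, G.Adj u v

/-- The domination number of a finite graph. -/
noncomputable def domNum {V : Type*} [Fintype V] (G : SimpleGraph V) : ℕ :=
  sInf {n | ∃ S : Finset V, S.card = n ∧ IsDomSet G ↑S}

lemma domNum_exists {V : Type*} [Fintype V] (G : SimpleGraph V) :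
    ∃ S : Finset V, S.card = domNum G ∧ IsDomSet G ↑S := by
  have hne : {n | ∃ S : Finset V, S.card = n ∧ IsDomSet G ↑S}.Nonempty :=
    ⟨(Finset.univ : Finset V).card, Finset.univ, rfl, fun v => Or.inl (by simp)⟩
  exact Nat.sInf_mem hne

lemma domNum_le {V : Type*} [Fintype V] (G : SimpleGraph V) (S : Finset V)
    (h : IsDomSet G ↑S) : domNum G ≤ S.card :=
  Nat.sInf_le ⟨S, rfl, h⟩

lemma clark_suen_nat {VX VY : Type*} [Fintype VX] [Fintype VY]
    (X : SimpleGraph VX) (Y : SimpleGraph VY) :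
    domNum X * domNum Y ≤ 2 * domNum (X □ Y) := by
  classical
  obtain ⟨D, hDcard, hD⟩ := domNum_exists (X □ Y)
  obtain ⟨H, hHcard, hH⟩ := domNum_exists Y
  -- choose for each vertex of Y a dominator in H
  have hfex : ∀ h : VY, ∃ u, u ∈ H ∧ (u = h ∨ Y.Adj u h) := by
    intro h
    rcases hH h with h1 | ⟨u, hu, hadj⟩
    · exact ⟨h, by simpa using h1, Or.inl rfl⟩
    · exact ⟨u, by simpa using hu, Or.inr hadj⟩
  choose f hfH hfdom using hfex
  -- cells, projections, vertically-dominated sets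
  set P : VY → Finset VX := fun i => (D.filter (fun p => f p.2 = i)).image Prod.fst with hP
  set coldom : VX → VY → Prop :=
    fun g h => ((g, h) ∈ D ∨ ∃ h', (g, h') ∈ D ∧ Y.Adj h' h) with hcoldom
  set B : VY → Finset VX :=
    fun i => Finset.univ.filter (fun g => ∀ h, f h = i → coldom g h) with hB
  -- Claim 1 : γ(X) ≤ |P i| + |B i| for i ∈ H
  have claim1 : ∀ i ∈ H, domNum X ≤ (P i).card + (B i).card := by
    intro i _
    refine le_trans (domNum_le X (P i ∪ B i) ?_) (Finset.card_union_le _ _)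
    intro g
    by_cases hg : ∀ h, f h = i → coldom g h
    · refine Or.inl ?_
      simp only [Finset.coe_union, Set.mem_union, Finset.mem_coe]
      exact Or.inr (Finset.mem_filter.mpr ⟨Finset.mem_univ g, hg⟩)
    · push_neg at hg
      obtain ⟨h, hfh, hnc⟩ := hg
      rcases hD (g, h) with hmem | ⟨u, hu, hadj⟩
      · exact absurd (Or.inl (by simpa using hmem)) hnc
      · simp only [Finset.coe_union, Set.mem_union, Finset.mem_coe] at hu ⊢
        rw [boxProd_adj] at hadj
        rcases hadj with ⟨hX, h2⟩ | ⟨hY, h1⟩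
        · refine Or.inr ⟨u.1, Or.inl ?_, hX⟩
          simp only [hP, Finset.mem_image, Finset.mem_filter]
          exact ⟨u, ⟨hu, by rw [h2, hfh]⟩, rfl⟩
        · have h1' : u.1 = g := h1
          have hu' : (g, u.2) ∈ D := by rw [← h1']; exact hu
          exact absurd (Or.inr ⟨u.2, hu', hY⟩) hnc
  -- Claim 2 : ∑ |P i| ≤ |D|
  have claim2 : ∑ i ∈ H, (P i).card ≤ D.card := by
    have := Finset.card_eq_sum_card_fiberwise
      (f := fun p : VX × VY => f p.2) (s := D) (t := H) (fun p _ => hfH p.2)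
    rw [this]
    exact Finset.sum_le_sum fun i _ => Finset.card_image_le
  -- Claim 3 : ∑ |B i| ≤ |D|
  have claim3 : ∑ i ∈ H, (B i).card ≤ D.card := by
    have hswap : ∑ i ∈ H, (B i).card
        = ∑ g : VX, (H.filter (fun i => g ∈ B i)).card := by
      have l : ∀ i, (B i).card = ∑ g : VX, if g ∈ B i then 1 else 0 := by
        intro i
        rw [Finset.sum_ite_mem, Finset.univ_inter, Finset.sum_const, smul_eq_mul, mul_one]
      simp only [l, Finset.card_filter]
      exact Finset.sum_comm
    rw [hswap]
    have hfiber : D.card = ∑ g : VX, (D.filter (fun p => p.1 = g)).card :=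
      Finset.card_eq_sum_card_fiberwise (fun p _ => Finset.mem_univ _)
    rw [hfiber]
    refine Finset.sum_le_sum fun g _ => ?_
    -- per column bound
    set Ig := H.filter (fun i => g ∈ B i) with hIg
    set Dg := (D.filter (fun p => p.1 = g)).image Prod.snd with hDg
    have hdom : IsDomSet Y ↑(Dg ∪ (H \ Ig)) := by
      intro h
      by_cases hi : f h ∈ Ig
      · have hgB : g ∈ B (f h) := (Finset.mem_filter.mp hi).2
        have hcd : coldom g h := (Finset.mem_filter.mp hgB).2 h rfl
        rcases hcd with hmem | ⟨h', hh', hadj⟩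
        · refine Or.inl ?_
          simp only [Finset.coe_union, Set.mem_union, Finset.mem_coe]
          exact Or.inl (Finset.mem_image.mpr ⟨(g, h), Finset.mem_filter.mpr ⟨hmem, rfl⟩, rfl⟩)
        · refine Or.inr ⟨h', ?_, hadj⟩
          simp only [Finset.coe_union, Set.mem_union, Finset.mem_coe]
          exact Or.inl (Finset.mem_image.mpr ⟨(g, h'), Finset.mem_filter.mpr ⟨hh', rfl⟩, rfl⟩)
      · have hmem : f h ∈ H \ Ig := Finset.mem_sdiff.mpr ⟨hfH h, hi⟩
        rcases hfdom h with heq | hadj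
        · left
          simp only [Finset.coe_union, Set.mem_union, Finset.mem_coe]
          exact Or.inr (heq ▸ hmem)
        · refine Or.inr ⟨f h, ?_, hadj⟩
          simp only [Finset.coe_union, Set.mem_union, Finset.mem_coe]
          exact Or.inr hmem
    have hle := domNum_le Y _ hdom
    have hcard : (Dg ∪ (H \ Ig)).card ≤ Dg.card + (H.card - Ig.card) := by
      refine le_trans (Finset.card_union_le _ _) ?_
      gcongr
      rw [Finset.card_sdiff_of_subset (Finset.filter_subset _ _)]
    have hIgle : Ig.card ≤ H.card := Finset.card_le_card (Finset.filter_subset _ _)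
    have hDgle : Dg.card ≤ (D.filter (fun p => p.1 = g)).card := Finset.card_image_le
    omega
  -- combine
  calc domNum X * domNum Y = H.card * domNum X := by rw [hHcard, mul_comm]
    _ = ∑ _i ∈ H, domNum X := by rw [Finset.sum_const, smul_eq_mul]
    _ ≤ ∑ i ∈ H, ((P i).card + (B i).card) := Finset.sum_le_sum claim1
    _ = ∑ i ∈ H, (P i).card + ∑ i ∈ H, (B i).card := Finset.sum_add_distrib
    _ ≤ D.card + D.card := Nat.add_le_add claim2 claim3
    _ = 2 * domNum (X □ Y) := by rw [hDcard]; ring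

/-- Clark–Suen: γ(X □ Y) ≥ (1/2)·γ(X)·γ(Y). -/
theorem stmt_1 {VX VY : Type*} [Fintype VX] [Fintype VY]
    (X : SimpleGraph VX) (Y : SimpleGraph VY) :
    (domNum (X □ Y) : ℚ) ≥ (1 / 2 : ℚ) * domNum X * domNum Y := by
  have h := clark_suen_nat X Y
  have h' : (domNum X * domNum Y : ℚ) ≤ 2 * domNum (X □ Y) := by exact_mod_cast h
  linarith
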